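/- Let F satisfy the pentagon identity, unitarity, tetrahedral symmetry, normalization and physicality with d_i > 0 for all i. Define the F-move operator F_e on C^{N+1} ⊗ (C^{N+1})^{⊗4} by F_e(|m⟩ ⊗ |ijkl⟩) = Σ_n F^{ijm}_{kln} |n⟩ ⊗ |ijkl⟩ (with external labels i,j,k,l as controls). Then F_e restricted to the physical subspace spanned by basis states with δ_{ijm} δ_{klm*} = 1 is an isometry onto the subspace spanned by basis states with δ_{iln} δ_{jkn*} = 1. -/

import Mathlib

open scoped BigOperators

/-- The F-move operator `F_e` on `ℂ^{N+1} ⊗ (ℂ^{N+1})^{⊗4}`: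
`F_e (|m⟩ ⊗ |ijkl⟩) = Σ_n F^{ijm}_{kln} |n⟩ ⊗ |ijkl⟩`, written as a matrix in the
standard basis, with basis indices `(m, (i, j, k, l))`. -/
def FMoveOp {N : ℕ}
    (F : Fin (N + 1) → Fin (N + 1) → Fin (N + 1) → Fin (N + 1) → Fin (N + 1) →
      Fin (N + 1) → ℂ) :
    Matrix (Fin (N + 1) × Fin (N + 1) × Fin (N + 1) × Fin (N + 1) × Fin (N + 1))
      (Fin (N + 1) × Fin (N + 1) × Fin (N + 1) × Fin (N + 1) × Fin (N + 1)) ℂ :=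
  fun x y =>
    if x.2 = y.2 then F y.2.1 y.2.2.1 y.1 y.2.2.2.1 y.2.2.2.2 x.1 else 0

/-- For a string-net tensor `F` satisfying the axioms with `d_i > 0`, the
F-move operator restricted to the physical subspace (spanned by basis states with
`δ_{ijm} δ_{klm*} = 1`) is an isometry onto the subspace spanned by basis states with
`δ_{iln} δ_{jkn*} = 1`: it maps the source subspace into the target subspace, preserves
inner products there, and is surjective onto the target subspace. -/
theorem FMove_isometry_physical {N : ℕ}
    (st : Fin (N + 1) → Fin (N + 1))
    (hst : ∀ i, st (st i) = i) (hst0 : st 0 = 0)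
    (Δ : Fin (N + 1) → Fin (N + 1) → Fin (N + 1) → ℂ)
    (hΔ01 : ∀ i j k, Δ i j k = 0 ∨ Δ i j k = 1)
    (hΔcyc : ∀ i j k, Δ i j k = Δ j k i)
    (hΔbr : ∀ i j, Δ i (st j) 0 = if i = j then 1 else 0)
    (F : Fin (N + 1) → Fin (N + 1) → Fin (N + 1) → Fin (N + 1) → Fin (N + 1) →
      Fin (N + 1) → ℂ)
    (d : Fin (N + 1) → ℝ)
    (hd : ∀ i, 0 < d i)
    (hdF : ∀ i, F i (st i) 0 i (st i) 0 = ((d i)⁻¹ : ℝ))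
    (hphys : ∀ i j m k l n,
      F i j m k l n * Δ i j m * Δ k l (st m) = F i j m k l n * Δ i l n * Δ j k (st n))
    (hpent : ∀ m l q k p j i s r,
      ∑ n, F m l q k p n * F j i (st p) m n s * F j s n l k r =
        F j i (st p) (st q) k r * F (st r) i (st q) m l s)
    (hun : ∀ i j m k l n, (starRingEnd ℂ) (F i j m k l n) =
      F (st i) (st j) (st m) (st k) (st l) (st n))
    (htet : ∀ i j m k l n,
      F i j m k l n = F j i m l k (st n) ∧
      F i j m k l n = F l k (st m) j i n ∧
      F i j m k l n = F i m j (st k) n l *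
        (Real.sqrt (d m * d n / (d j * d l)) : ℝ))
    (hnorm : ∀ i j k, F i (st i) 0 (st j) j k =
      (Real.sqrt (d k / (d i * d j)) : ℝ) * Δ i j k)
    -- source (physical) and target basis-index sets
    (Src Tgt : Set (Fin (N + 1) × Fin (N + 1) × Fin (N + 1) × Fin (N + 1) × Fin (N + 1)))
    (hSrc : ∀ x, x ∈ Src ↔ Δ x.2.1 x.2.2.1 x.1 * Δ x.2.2.2.1 x.2.2.2.2 (st x.1) = 1)
    (hTgt : ∀ x, x ∈ Tgt ↔ Δ x.2.1 x.2.2.2.2 x.1 * Δ x.2.2.1 x.2.2.2.1 (st x.1) = 1) :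
    -- maps the physical subspace into the target subspace
    (∀ v, (∀ x, x ∉ Src → v x = 0) → ∀ x, x ∉ Tgt → (FMoveOp F).mulVec v x = 0) ∧
    -- preserves inner products on the physical subspace
    (∀ v w, (∀ x, x ∉ Src → v x = 0) → (∀ x, x ∉ Src → w x = 0) →
      ∑ x, (starRingEnd ℂ) ((FMoveOp F).mulVec v x) * (FMoveOp F).mulVec w x =
        ∑ x, (starRingEnd ℂ) (v x) * w x) ∧
    -- surjective onto the target subspace
    (∀ w, (∀ x, x ∉ Tgt → w x = 0) →
      ∃ v, (∀ x, x ∉ Src → v x = 0) ∧ (FMoveOp F).mulVec v = w) := by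

  classical
  -- Basic facts about st
  have hstinj : Function.Injective st := fun a b h => by rw [← hst a, h, hst b]
  -- tetra shortcuts
  have t1 : ∀ i j m k l n, F i j m k l n = F j i m l k (st n) :=
    fun i j m k l n => (htet i j m k l n).1
  have t2 : ∀ i j m k l n, F i j m k l n = F l k (st m) j i n :=
    fun i j m k l n => (htet i j m k l n).2.1
  have t3 : ∀ i j m k l n, F i j m k l n = F i m j (st k) n l *
      (Real.sqrt (d m * d n / (d j * d l)) : ℝ) :=
    fun i j m k l n => (htet i j m k l n).2.2
  have hdne : ∀ i, d i ≠ 0 := fun i => (hd i).ne'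
  -- d is star-invariant
  have hdst : ∀ i, d (st i) = d i := by
    intro i
    have h1 := hdF i
    have h2 := t1 i (st i) 0 i (st i) 0
    rw [hst0] at h2
    have h3 := hdF (st i)
    rw [hst i] at h3
    rw [h2, h3] at h1
    have h4 : ((d (st i))⁻¹ : ℝ) = (d i)⁻¹ := by exact_mod_cast h1
    exact inv_injective h4
  -- Δ 0 0 0 = 1
  have hΔ000 : Δ 0 0 0 = 1 := by
    have h := hΔbr 0 0
    rw [hst0] at h
    simpa using h
  -- d 0 = 1
  have hd0 : d 0 = 1 := by
    have h1 := hdF 0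
    rw [hst0] at h1
    have h2 := hnorm 0 0 0
    rw [hst0, hΔ000, mul_one] at h2
    rw [h2] at h1
    have h3 : Real.sqrt (d 0 / (d 0 * d 0)) = (d 0)⁻¹ := by exact_mod_cast h1
    have h4 : d 0 / (d 0 * d 0) = (d 0)⁻¹ := by
      rw [div_mul_eq_div_div, div_self (hd 0).ne', one_div]
    rw [h4] at h3
    have h5 : (d 0)⁻¹ * (d 0)⁻¹ = (d 0)⁻¹ := by
      nth_rw 1 [← h3]
      nth_rw 2 [← h3]
      exact Real.mul_self_sqrt (inv_nonneg.mpr (hd 0).le)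
    have h7 : (d 0)⁻¹ = (1 : ℝ) :=
      mul_left_cancel₀ (inv_ne_zero (hd 0).ne') (h5.trans (mul_one _).symm)
    exact inv_eq_one.mp h7
  have hdpos : ∀ z x y, 0 < d z / (d x * d y) :=
    fun z x y => div_pos (hd z) (mul_pos (hd x) (hd y))
  have hsqrt_ne : ∀ x y z, ((Real.sqrt (d z / (d x * d y)) : ℝ) : ℂ) ≠ 0 :=
    fun x y z => Complex.ofReal_ne_zero.mpr (Real.sqrt_pos.mpr (hdpos z x y)).ne'
  have sqrtmul : ∀ x y : ℝ, 0 < x → 0 < y →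
      Real.sqrt (x / y) * Real.sqrt (y / x) = 1 := by
    intro x y hx hy
    rw [← Real.sqrt_mul (div_pos hx hy).le]
    rw [div_mul_div_comm, mul_comm x y, div_self (mul_pos hy hx).ne']
    exact Real.sqrt_one
  -- Δ symmetries
  have hΔsym : ∀ i j k, Δ i j k = Δ j i k := by
    intro i j k
    have h2 := t2 i (st i) 0 (st j) j k
    rw [hst0] at h2
    rw [hnorm i j k, hnorm j i k] at h2
    rw [mul_comm (d j) (d i)] at h2
    exact mul_left_cancel₀ (hsqrt_ne i j k) h2
  have hΔstar : ∀ i j k, Δ i j k = Δ (st i) (st j) (st k) := by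
    intro i j k
    have h1 := t1 i (st i) 0 (st j) j k
    have h2 := hnorm (st i) (st j) (st k)
    rw [hst i, hst j, hdst i, hdst j, hdst k] at h2
    rw [h2, hnorm i j k] at h1
    exact mul_left_cancel₀ (hsqrt_ne i j k) h1
  have hΔstar' : ∀ i j k, Δ i j (st k) = Δ (st i) (st j) k := by
    intro i j k
    have h := hΔstar i j (st k)
    rwa [hst k] at h
  have hΔbr' : ∀ i j, Δ i j 0 = if i = st j then 1 else 0 := by
    intro i j
    have h := hΔbr i (st j)
    rwa [hst j] at h
  have hΔsplit : ∀ {i j k x y z : Fin (N + 1)}, Δ i j k * Δ x y z = 1 →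
      Δ i j k = 1 ∧ Δ x y z = 1 := by
    intro i j k x y z h
    rcases hΔ01 i j k with h1 | h1 <;> rcases hΔ01 x y z with h2 | h2 <;>
      simp [h1, h2] at h ⊢
  have hΔpp : ∀ i j k x y z : Fin (N + 1), Δ i j k * Δ x y z = 1 ∨ Δ i j k * Δ x y z = 0 := by
    intro i j k x y z
    rcases hΔ01 i j k with h1 | h1 <;> rcases hΔ01 x y z with h2 | h2 <;> simp [h1, h2]
  have hΔprod01 : ∀ {i j k x y z : Fin (N + 1)}, ¬(Δ i j k * Δ x y z = 1) →
      Δ i j k * Δ x y z = 0 := fun h => (hΔpp _ _ _ _ _ _).resolve_left h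
  -- vanishing of F from physicality
  have hFzeroLR : ∀ i j m k l n, Δ i j m * Δ k l (st m) = 1 →
      Δ i l n * Δ j k (st n) = 0 → F i j m k l n = 0 := by
    intro i j m k l n h1 h2
    have h := hphys i j m k l n
    rw [mul_assoc, mul_assoc, h1, h2, mul_one, mul_zero] at h
    exact h
  have hFzeroRL : ∀ i j m k l n, Δ i j m * Δ k l (st m) = 0 →
      Δ i l n * Δ j k (st n) = 1 → F i j m k l n = 0 := by
    intro i j m k l n h1 h2
    have h := hphys i j m k l n
    rw [mul_assoc, mul_assoc, h1, h2, mul_zero, mul_one] at h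
    exact h.symm
  -- derived transpose tetra identity
  have hD : ∀ a b c e f g, F a b c e f g = F (st e) (st b) g (st a) (st f) c := by
    intro a b c e f g
    have s1 := t3 a b c e f g
    rw [t1 a c b (st e) g f, t2 c a b g (st e) (st f), t3 (st e) g (st b) a c (st f)] at s1
    rw [hdst b, hdst f, mul_assoc] at s1
    rw [s1, ← Complex.ofReal_mul]
    rw [show Real.sqrt (d b * d f / (d g * d c)) * Real.sqrt (d c * d g / (d b * d f)) = 1 from by
      rw [mul_comm (d c) (d g)]
      exact sqrtmul _ _ (mul_pos (hd b) (hd f)) (mul_pos (hd g) (hd c))]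
    rw [Complex.ofReal_one, mul_one]
  -- conjugation identity
  have hC2 : ∀ a b c dd e f, (starRingEnd ℂ) (F a b c dd e f) = F a e f dd b c := by
    intro a b c dd e f
    rw [hun]
    rw [t1 a e f dd b c, hD e a f b dd (st c), t1 (st b) (st a) (st c) (st e) (st dd) f]
  -- evaluation of an F with one lower index 0
  have hB : ∀ j r k, F j r k 0 k r = Δ k r j := by
    intro j r k
    have s1 := t2 j r k 0 k r
    rw [t3 k 0 (st k) r j r] at s1
    rw [hnorm k r j] at s1
    rw [hdst k, hd0, one_mul] at s1
    rw [s1, mul_right_comm, ← Complex.ofReal_mul]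
    rw [show Real.sqrt (d j / (d k * d r)) * Real.sqrt (d k * d r / d j) = 1 from
      sqrtmul _ _ (hd j) (mul_pos (hd k) (hd r))]
    rw [Complex.ofReal_one, one_mul]
  -- reshaped normalization
  have hnorm' : ∀ x y n, F (st x) x 0 y (st y) n =
      (Real.sqrt (d n / (d x * d y)) : ℝ) * Δ (st x) (st y) n := by
    intro x y n
    have h := hnorm (st x) (st y) n
    rwa [hst x, hst y, hdst x, hdst y] at h
  -- MAIN: orthogonality from the pentagon
  have hKey : ∀ a b c dd p q, Δ a b p = 1 → Δ c dd (st p) = 1 → Δ a b q = 1 →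
      Δ c dd (st q) = 1 →
      ∑ n, F a b p c dd n * F a dd n c b q = if p = q then 1 else 0 := by
    intro a b c dd p q hp1 hp2 hq1 hq2
    have hpent' := hpent (st c) c 0 b (st b) a p dd q
    rw [hst b, hst0] at hpent'
    have hring : ∀ X Y u v : ℂ, u * (X * v) * Y = u * v * (X * Y) := by intros; ring
    have hLHS : ∑ n, F (st c) c 0 b (st b) n * F a p b (st c) n dd * F a dd n c b q
        = ((Real.sqrt (d dd / (d c * d p)) : ℝ) : ℂ) *
          ∑ n, F a b p c dd n * F a dd n c b q := by
      rw [Finset.mul_sum]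
      refine Finset.sum_congr rfl fun n _ => ?_
      rcases hΔ01 (st c) (st b) n with h0 | h1
      · have hF0 : F a b p c dd n = 0 := by
          apply hFzeroLR
          · rw [hp1, hp2, mul_one]
          · have hbc : Δ b c (st n) = 0 := by
              rw [hΔstar' b c n, hΔsym (st b) (st c) n]
              exact h0
            rw [hbc, mul_zero]
        rw [hnorm' c b n, h0, hF0]
        ring
      · rw [hnorm' c b n, h1, mul_one, t3 a p b (st c) n dd, hst c]
        rw [hring]
        congr 1
        rw [← Complex.ofReal_mul, ← Real.sqrt_mul (hdpos n c b).le]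
        rw [show d n / (d c * d b) * (d b * d dd / (d p * d n)) = d dd / (d c * d p) from by
          field_simp [hdne n, hdne c, hdne b, hdne p]]
    rw [hLHS] at hpent'
    by_cases hpq : p = q
    · subst hpq
      rw [hB a p b] at hpent'
      have hΔbpa : Δ b p a = 1 := by rw [← hΔcyc a b p]; exact hp1
      have h2 : F (st p) p 0 (st c) c dd = ((Real.sqrt (d dd / (d p * d c)) : ℝ) : ℂ) := by
        have h := hnorm (st p) c dd
        rw [hst p, hdst p] at h
        have hΔ1 : Δ (st p) c dd = 1 := by
          rw [← hΔcyc dd (st p) c, ← hΔcyc c dd (st p)]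
          exact hp2
        rw [hΔ1, mul_one] at h
        exact h
      rw [hΔbpa, one_mul, h2] at hpent'
      rw [mul_comm (d p) (d c)] at hpent'
      have hSig := mul_left_cancel₀ (hsqrt_ne c p dd) (hpent'.trans (mul_one _).symm)
      simp [hSig]
    · have hF0 : F (st q) p 0 (st c) c dd = 0 := by
        apply hFzeroRL
        · rw [show Δ (st q) p 0 = 0 from by
            rw [hΔbr' (st q) p]
            exact if_neg fun h => hpq (hstinj h).symm]
          rw [zero_mul]
        · have e1 : Δ (st q) c dd = 1 := by
            rw [← hΔcyc dd (st q) c, ← hΔcyc c dd (st q)]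
            exact hq2
          have e2 : Δ p (st c) (st dd) = 1 := by
            rw [← hΔcyc (st dd) p (st c), ← hΔcyc (st c) (st dd) p, ← hΔstar' c dd p]
            exact hp2
          rw [e1, e2, mul_one]
      rw [hF0, mul_zero] at hpent'
      have hSig := (mul_eq_zero.mp hpent').resolve_left (hsqrt_ne c p dd)
      rw [hSig, if_neg hpq]
  -- column orthonormality
  have hColOrth : ∀ a b c dd p q, Δ a b p = 1 → Δ c dd (st p) = 1 → Δ a b q = 1 →
      Δ c dd (st q) = 1 →
      ∑ n, F a b p c dd n * (starRingEnd ℂ) (F a b q c dd n) = if p = q then 1 else 0 := by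
    intro a b c dd p q h1 h2 h3 h4
    have e : ∀ n, (starRingEnd ℂ) (F a b q c dd n) = F a dd n c b q :=
      fun n => hC2 a b q c dd n
    simp only [e]
    exact hKey a b c dd p q h1 h2 h3 h4
  -- row orthonormality
  have hRowOrth : ∀ a b c dd p q, Δ a dd p = 1 → Δ b c (st p) = 1 → Δ a dd q = 1 →
      Δ b c (st q) = 1 →
      ∑ m, F a b m c dd p * (starRingEnd ℂ) (F a b m c dd q) = if p = q then 1 else 0 := by
    intro a b c dd p q h1 h2 h3 h4
    have e : ∀ m r, F a b m c dd r = F (st c) (st b) r (st a) (st dd) m :=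
      fun m r => hD a b m c dd r
    simp only [e]
    refine hColOrth (st c) (st b) (st a) (st dd) p q ?_ ?_ ?_ ?_
    · rw [← hΔsym (st b) (st c) p, ← hΔstar' b c p]
      exact h2
    · rw [← hΔstar a dd p]
      exact h1
    · rw [← hΔsym (st b) (st c) q, ← hΔstar' b c q]
      exact h4
    · rw [← hΔstar a dd q]
      exact h3
  -- mulVec formula
  have hmv : ∀ (v : Fin (N + 1) × Fin (N + 1) × Fin (N + 1) × Fin (N + 1) × Fin (N + 1) → ℂ)
      (n0 : Fin (N + 1)) (c : Fin (N + 1) × Fin (N + 1) × Fin (N + 1) × Fin (N + 1)),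
      (FMoveOp F).mulVec v (n0, c) =
        ∑ m, F c.1 c.2.1 m c.2.2.1 c.2.2.2 n0 * v (m, c) := by
    intro v n0 c
    simp only [Matrix.mulVec, dotProduct, FMoveOp]
    rw [Fintype.sum_prod_type]
    refine Finset.sum_congr rfl fun m _ => ?_
    simp [ite_mul]
  -- generic isometry sum lemma
  have gensum : ∀ (A : Fin (N + 1) → Fin (N + 1) → ℂ) (S : Fin (N + 1) → Prop)
      (v' w' : Fin (N + 1) → ℂ),
      (∀ m, ¬ S m → v' m = 0) → (∀ m, ¬ S m → w' m = 0) →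
      (∀ p q, S p → S q → ∑ n, (starRingEnd ℂ) (A n p) * A n q = if p = q then 1 else 0) →
      ∑ n, (starRingEnd ℂ) (∑ m, A n m * v' m) * (∑ m, A n m * w' m)
        = ∑ m, (starRingEnd ℂ) (v' m) * w' m := by
    intro A S v' w' hv' hw' horth
    have e1 : ∀ n, (starRingEnd ℂ) (∑ m, A n m * v' m) * (∑ m, A n m * w' m)
        = ∑ m, ∑ m', ((starRingEnd ℂ) (v' m) * w' m') *
            ((starRingEnd ℂ) (A n m) * A n m') := by
      intro n
      rw [map_sum, Finset.sum_mul_sum]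
      refine Finset.sum_congr rfl fun m _ => Finset.sum_congr rfl fun m' _ => ?_
      rw [map_mul]
      ring
    simp only [e1]
    rw [Finset.sum_comm]
    refine Finset.sum_congr rfl fun m _ => ?_
    rw [Finset.sum_comm]
    by_cases hm : S m
    · have e2 : ∀ m', ∑ n, ((starRingEnd ℂ) (v' m) * w' m') *
          ((starRingEnd ℂ) (A n m) * A n m')
          = if m = m' then (starRingEnd ℂ) (v' m) * w' m' else 0 := by
        intro m'
        rw [← Finset.mul_sum]
        by_cases hm' : S m'
        · rw [horth m m' hm hm', mul_ite, mul_one, mul_zero]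
        · simp [hw' m' hm']
      simp only [e2]
      simp
    · simp [hv' m hm]
  refine ⟨?_, ?_, ?_⟩
  · -- maps Src into Tgt
    intro v hv x hx
    obtain ⟨n0, c⟩ := x
    rw [hmv]
    refine Finset.sum_eq_zero fun m _ => ?_
    by_cases hm : (m, c) ∈ Src
    · have h1 := (hSrc (m, c)).mp hm
      have h2 : Δ c.1 c.2.2.2 n0 * Δ c.2.1 c.2.2.1 (st n0) = 0 :=
        hΔprod01 fun h => hx ((hTgt (n0, c)).mpr h)
      rw [hFzeroLR c.1 c.2.1 m c.2.2.1 c.2.2.2 n0 h1 h2, zero_mul]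
    · rw [hv _ hm, mul_zero]
  · -- preserves inner products
    intro v w hv hw
    rw [Fintype.sum_prod_type, Fintype.sum_prod_type]
    rw [Finset.sum_comm]
    conv_rhs => rw [Finset.sum_comm]
    refine Finset.sum_congr rfl fun c _ => ?_
    simp only [hmv]
    refine gensum (fun n m => F c.1 c.2.1 m c.2.2.1 c.2.2.2 n) (fun m => (m, c) ∈ Src)
      (fun m => v (m, c)) (fun m => w (m, c))
      (fun m hm => hv _ hm) (fun m hm => hw _ hm) ?_
    intro p q hp hq
    obtain ⟨hp1, hp2⟩ := hΔsplit ((hSrc (p, c)).mp hp)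
    obtain ⟨hq1, hq2⟩ := hΔsplit ((hSrc (q, c)).mp hq)
    calc ∑ n, (starRingEnd ℂ) (F c.1 c.2.1 p c.2.2.1 c.2.2.2 n) *
          F c.1 c.2.1 q c.2.2.1 c.2.2.2 n
        = ∑ n, F c.1 c.2.1 q c.2.2.1 c.2.2.2 n *
            (starRingEnd ℂ) (F c.1 c.2.1 p c.2.2.1 c.2.2.2 n) :=
          Finset.sum_congr rfl fun n _ => mul_comm _ _
      _ = if q = p then 1 else 0 := hColOrth c.1 c.2.1 c.2.2.1 c.2.2.2 q p hq1 hq2 hp1 hp2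
      _ = if p = q then 1 else 0 := by simp [eq_comm]
  · -- surjectivity onto Tgt
    intro w hw
    refine ⟨fun x => ∑ n, (starRingEnd ℂ) (F x.2.1 x.2.2.1 x.1 x.2.2.2.1 x.2.2.2.2 n) *
      w (n, x.2), ?_, ?_⟩
    · intro x hx
      obtain ⟨m0, c⟩ := x
      refine Finset.sum_eq_zero fun n _ => ?_
      by_cases hn : (n, c) ∈ Tgt
      · have h2 := (hTgt (n, c)).mp hn
        have h1 : Δ c.1 c.2.1 m0 * Δ c.2.2.1 c.2.2.2 (st m0) = 0 :=
          hΔprod01 fun h => hx ((hSrc (m0, c)).mpr h)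
        rw [hFzeroRL c.1 c.2.1 m0 c.2.2.1 c.2.2.2 n h1 h2, map_zero, zero_mul]
      · rw [hw _ hn, mul_zero]
    · funext x
      obtain ⟨n0, c⟩ := x
      rw [hmv]
      simp only [Finset.mul_sum]
      rw [Finset.sum_comm]
      have e3 : ∀ n', ∑ m, F c.1 c.2.1 m c.2.2.1 c.2.2.2 n0 *
          ((starRingEnd ℂ) (F c.1 c.2.1 m c.2.2.1 c.2.2.2 n') * w (n', c))
          = (if n0 = n' then 1 else 0) * w (n', c) := by
        intro n'
        by_cases hn' : (n', c) ∈ Tgt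
        · obtain ⟨h1', h2'⟩ := hΔsplit ((hTgt (n', c)).mp hn')
          have hsum : ∑ m, F c.1 c.2.1 m c.2.2.1 c.2.2.2 n0 *
              (starRingEnd ℂ) (F c.1 c.2.1 m c.2.2.1 c.2.2.2 n')
              = if n0 = n' then 1 else 0 := by
            by_cases hn0 : (n0, c) ∈ Tgt
            · obtain ⟨h1, h2⟩ := hΔsplit ((hTgt (n0, c)).mp hn0)
              exact hRowOrth c.1 c.2.1 c.2.2.1 c.2.2.2 n0 n' h1 h2 h1' h2'
            · have hne : n0 ≠ n' := fun h => hn0 (h ▸ hn')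
              rw [if_neg hne]
              refine Finset.sum_eq_zero fun m _ => ?_
              rcases hΔpp c.1 c.2.1 m c.2.2.1 c.2.2.2 (st m) with hL | hL
              · have h0 : Δ c.1 c.2.2.2 n0 * Δ c.2.1 c.2.2.1 (st n0) = 0 :=
                  hΔprod01 fun h => hn0 ((hTgt (n0, c)).mpr h)
                rw [hFzeroLR c.1 c.2.1 m c.2.2.1 c.2.2.2 n0 hL h0, zero_mul]
              · rw [hFzeroRL c.1 c.2.1 m c.2.2.1 c.2.2.2 n' hL
                  (by rw [h1', h2', mul_one]), map_zero, mul_zero]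
          simp only [← mul_assoc]
          rw [← Finset.sum_mul, hsum]
        · simp [hw _ hn']
      simp only [e3]
      simp [ite_mul]
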